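/- If K is a compact Hausdorff space and A is an open subset of K such that every point-finite family of nonempty open subsets of K meeting A has cardinality at most κ, where κ := c(A, K) is infinite, then c_pf(A, K) = c(A, K). More precisely: for an open subset A of a compact Hausdorff (equivalently, Baire) space K, any point-finite family of nonempty open subsets of K each of which intersects A has cardinality at most the relative cellularity c(A, K), provided c(A, K) is infinite. -/

import Mathlib

open Set Cardinal

/-- The relative cellularity of `A` in `X`. -/
noncomputable def relCell (X : Type*) [TopologicalSpace X] (A : Set X) : Cardinal :=
  ⨆ 𝒰 : {𝒰 : Set (Set X) // (∀ U ∈ 𝒰, IsOpen U ∧ (U ∩ A).Nonempty) ∧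
      𝒰.PairwiseDisjoint id}, #↥𝒰.1

/-- The relative point-finite cellularity of `A` in `X`: the supremum of cardinalities of
point-finite families of nonempty open subsets of `X`, each intersecting `A`. -/
noncomputable def relPF (X : Type*) [TopologicalSpace X] (A : Set X) : Cardinal :=
  ⨆ 𝒰 : {𝒰 : Set (Set X) // (∀ U ∈ 𝒰, IsOpen U ∧ (U ∩ A).Nonempty) ∧
      ∀ x : X, {U ∈ 𝒰 | x ∈ U}.Finite}, #↥𝒰.1

section Aux

variable {K : Type*} [TopologicalSpace K] {A : Set K}

/-- Any pairwise disjoint family of open sets meeting `A` has cardinality at most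
the relative cellularity. -/
lemma RelCell.disj_le (𝒰 : Set (Set K)) (h1 : ∀ U ∈ 𝒰, IsOpen U ∧ (U ∩ A).Nonempty)
    (h2 : 𝒰.PairwiseDisjoint id) : #↥𝒰 ≤ relCell K A :=
  le_ciSup (Cardinal.bddAbove_range _) (⟨𝒰, h1, h2⟩ :
    {𝒰 : Set (Set K) // (∀ U ∈ 𝒰, IsOpen U ∧ (U ∩ A).Nonempty) ∧ 𝒰.PairwiseDisjoint id})

/-- Zorn: every family of sets contains a maximal pairwise disjoint subfamily. -/
lemma RelCell.exists_max_disjoint (𝒲 : Set (Set K)) :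
    ∃ D ⊆ 𝒲, D.PairwiseDisjoint id ∧ ∀ U ∈ 𝒲, U ∉ D → ∃ D' ∈ D, (U ∩ D').Nonempty := by
  have hch : ∀ c ⊆ {D | D ⊆ 𝒲 ∧ D.PairwiseDisjoint id}, IsChain (· ⊆ ·) c →
      ∃ ub ∈ {D | D ⊆ 𝒲 ∧ D.PairwiseDisjoint id}, ∀ s ∈ c, s ⊆ ub := by
    intro c hc hchain
    refine ⟨⋃₀ c, ⟨sUnion_subset fun D hD => (hc hD).1, ?_⟩, fun s hs => subset_sUnion_of_mem hs⟩
    intro U hU V hV hne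
    obtain ⟨D1, hD1, hU1⟩ := hU
    obtain ⟨D2, hD2, hV2⟩ := hV
    rcases hchain.total hD1 hD2 with h12 | h21
    · exact (hc hD2).2 (h12 hU1) hV2 hne
    · exact (hc hD1).2 hU1 (h21 hV2) hne
  obtain ⟨D, hD⟩ := zorn_subset {D | D ⊆ 𝒲 ∧ D.PairwiseDisjoint id} hch
  refine ⟨D, hD.prop.1, hD.prop.2, ?_⟩
  intro U hU hUD
  by_contra h
  push_neg at h
  have hins : insert U D ∈ {D | D ⊆ 𝒲 ∧ D.PairwiseDisjoint id} := by
    refine ⟨insert_subset hU hD.prop.1, pairwiseDisjoint_insert.2 ⟨hD.prop.2, ?_⟩⟩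
    intro j hj _
    have : U ∩ j = ∅ := h j hj
    simpa [Set.disjoint_iff_inter_eq_empty] using this
  exact hUD (hD.2 hins (subset_insert U D) (mem_insert U D))

/-- A family of nonempty open subsets of `A` whose order at every point of `A` is at most `n`
has cardinality at most the relative cellularity (assumed infinite). -/
lemma RelCell.point_bdd_le (hinf : ℵ₀ ≤ relCell K A) :
    ∀ n : ℕ, ∀ 𝒲 : Set (Set K),
      (∀ U ∈ 𝒲, IsOpen U ∧ U.Nonempty ∧ U ⊆ A) →
      (∀ x ∈ A, {U ∈ 𝒲 | x ∈ U}.Finite ∧ {U ∈ 𝒲 | x ∈ U}.ncard ≤ n) →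
      #↥𝒲 ≤ relCell K A := by
  intro n
  induction n with
  | zero =>
    intro 𝒲 h1 h2
    have h𝒲 : 𝒲 = ∅ := by
      by_contra h
      obtain ⟨U, hU⟩ := nonempty_iff_ne_empty.2 h
      obtain ⟨x, hx⟩ := (h1 U hU).2.1
      have hxA : x ∈ A := (h1 U hU).2.2 hx
      have hpos : 0 < {V ∈ 𝒲 | x ∈ V}.ncard :=
        (Set.ncard_pos (h2 x hxA).1).2 ⟨U, hU, hx⟩
      have := (h2 x hxA).2
      omega
    rw [h𝒲, Cardinal.mk_emptyCollection]
    exact zero_le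
  | succ n ih =>
    intro 𝒲 h1 h2
    classical
    obtain ⟨D, hDsub, hDdisj, hDmax⟩ := RelCell.exists_max_disjoint 𝒲
    have hDA : ∀ U ∈ D, IsOpen U ∧ (U ∩ A).Nonempty := by
      intro U hU
      obtain ⟨ho, hne, hsub⟩ := h1 U (hDsub hU)
      exact ⟨ho, by rwa [inter_eq_self_of_subset_left hsub]⟩
    have hDcard : #↥D ≤ relCell K A := RelCell.disj_le D hDA hDdisj
    have key : ∀ D' ∈ D, #↥{U ∈ 𝒲 | U ≠ D' ∧ (U ∩ D').Nonempty} ≤ relCell K A := by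
      intro D' hD'
      set G := {U ∈ 𝒲 | U ≠ D' ∧ (U ∩ D').Nonempty} with hG
      set F := (fun U => U ∩ D') '' G with hFdef
      have hD'w := h1 D' (hDsub hD')
      have hF1 : ∀ V ∈ F, IsOpen V ∧ V.Nonempty ∧ V ⊆ A := by
        rintro V ⟨U, hU, rfl⟩
        exact ⟨(h1 U hU.1).1.inter hD'w.1, hU.2.2, inter_subset_right.trans hD'w.2.2⟩
      set f : Set K → Set K := fun V => if h : V ∈ F then h.choose else ∅ with hfdef
      have hf : ∀ V ∈ F, f V ∈ G ∧ f V ∩ D' = V := by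
        intro V hV
        simp only [hfdef, dif_pos hV]
        exact ⟨hV.choose_spec.1, hV.choose_spec.2⟩
      have hfinj : InjOn f F := by
        intro V hV W hW hVW
        rw [← (hf V hV).2, ← (hf W hW).2, hVW]
      have hF2 : ∀ x ∈ A, {V ∈ F | x ∈ V}.Finite ∧ {V ∈ F | x ∈ V}.ncard ≤ n := by
        intro x hx
        by_cases hxD : x ∈ D'
        · have hmap : ∀ V ∈ {V ∈ F | x ∈ V}, f V ∈ {U ∈ 𝒲 | x ∈ U} \ {D'} := by
            rintro V ⟨hVF, hxV⟩
            obtain ⟨⟨hfw, hfne, -⟩, hfV⟩ := hf V hVF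
            refine ⟨⟨hfw, ?_⟩, hfne⟩
            rw [← hfV] at hxV
            exact hxV.1
          have hinj' : InjOn f {V ∈ F | x ∈ V} := hfinj.mono (sep_subset _ _)
          have hTfin : ({U ∈ 𝒲 | x ∈ U} \ {D'}).Finite := (h2 x hx).1.diff
          have hfin : {V ∈ F | x ∈ V}.Finite :=
            Set.Finite.of_finite_image (hTfin.subset (image_subset_iff.2 hmap)) hinj'
          refine ⟨hfin, le_trans (Set.ncard_le_ncard_of_injOn f hmap hinj' hTfin) ?_⟩
          have hD'mem : D' ∈ {U ∈ 𝒲 | x ∈ U} := ⟨hDsub hD', hxD⟩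
          have := Set.ncard_diff_singleton_add_one hD'mem (h2 x hx).1
          have h2' := (h2 x hx).2
          omega
        · have : {V ∈ F | x ∈ V} = ∅ := by
            ext V
            simp only [mem_sep_iff, mem_empty_iff_false, iff_false, not_and]
            rintro ⟨U, hU, rfl⟩ hxV
            exact hxD hxV.2
          simp [this]
      have hFcard : #↥F ≤ relCell K A := ih F hF1 hF2
      have hGsub : G ⊆ ⋃ V ∈ F, {U ∈ G | U ∩ D' = V} := by
        intro U hU
        exact mem_biUnion (mem_image_of_mem _ hU) ⟨hU, rfl⟩
      calc #↥G ≤ #↥(⋃ V ∈ F, {U ∈ G | U ∩ D' = V}) := Cardinal.mk_le_mk_of_subset hGsub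
        _ ≤ #↥F * ⨆ V : F, #↥{U ∈ G | U ∩ D' = (V : Set K)} := Cardinal.mk_biUnion_le _ _
        _ ≤ relCell K A * relCell K A := by
            refine mul_le_mul' hFcard (ciSup_le' ?_)
            rintro ⟨V, hV⟩
            obtain ⟨-, hVne, hVA⟩ := hF1 V hV
            obtain ⟨x, hxV⟩ := hVne
            have hfib : {U ∈ G | U ∩ D' = V} ⊆ {U ∈ 𝒲 | x ∈ U} := by
              rintro U ⟨hUG, rfl⟩
              exact ⟨hUG.1, hxV.1⟩
            have : {U ∈ G | U ∩ D' = V}.Finite := ((h2 x (hVA hxV)).1).subset hfib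
            exact le_trans this.lt_aleph0.le hinf
        _ = relCell K A := Cardinal.mul_eq_self hinf
    have hcover : 𝒲 ⊆ D ∪ ⋃ D' ∈ D, {U ∈ 𝒲 | U ≠ D' ∧ (U ∩ D').Nonempty} := by
      intro U hU
      by_cases hUD : U ∈ D
      · exact Or.inl hUD
      · obtain ⟨D', hD', hne⟩ := hDmax U hU hUD
        exact Or.inr (mem_biUnion hD' ⟨hU, fun h => hUD (h ▸ hD'), hne⟩)
    calc #↥𝒲 ≤ #↥(D ∪ ⋃ D' ∈ D, {U ∈ 𝒲 | U ≠ D' ∧ (U ∩ D').Nonempty}) :=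
          Cardinal.mk_le_mk_of_subset hcover
      _ ≤ #↥D + #↥(⋃ D' ∈ D, {U ∈ 𝒲 | U ≠ D' ∧ (U ∩ D').Nonempty}) := Cardinal.mk_union_le _ _
      _ ≤ relCell K A := by
          refine Cardinal.add_le_of_le hinf hDcard ?_
          calc #↥(⋃ D' ∈ D, {U ∈ 𝒲 | U ≠ D' ∧ (U ∩ D').Nonempty})
              ≤ #↥D * ⨆ D' : D, #↥{U ∈ 𝒲 | U ≠ (D' : Set K) ∧ (U ∩ (D' : Set K)).Nonempty} :=
                Cardinal.mk_biUnion_le _ _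
            _ ≤ relCell K A * relCell K A := by
                refine mul_le_mul' hDcard (ciSup_le' ?_)
                rintro ⟨D', hD'⟩
                exact key D' hD'
            _ = relCell K A := Cardinal.mul_eq_self hinf

/-- The set of points of order greater than `n` for a point-finite family of open sets
is open. -/
lemma RelCell.isOpen_hi (𝒰 : Set (Set K)) (hop : ∀ U ∈ 𝒰, IsOpen U)
    (hpf : ∀ x : K, {U ∈ 𝒰 | x ∈ U}.Finite) (n : ℕ) :
    IsOpen {x : K | n < {U ∈ 𝒰 | x ∈ U}.ncard} := by
  rw [isOpen_iff_forall_mem_open]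
  intro x hx
  refine ⟨⋂₀ {U ∈ 𝒰 | x ∈ U}, ?_, ?_, ?_⟩
  · intro y hy
    simp only [mem_sInter] at hy
    have hsub : {U ∈ 𝒰 | x ∈ U} ⊆ {U ∈ 𝒰 | y ∈ U} := fun U hU => ⟨hU.1, hy U hU⟩
    exact lt_of_lt_of_le hx (Set.ncard_le_ncard hsub (hpf y))
  · exact Set.Finite.isOpen_sInter (hpf x) (fun U hU => hop U hU.1)
  · exact fun U hU => hU.2

/-- Baire category: inside any nonempty open set there is a nonempty open set on which some
point-finite family of open sets has uniformly bounded order. -/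
lemma RelCell.baire_step [CompactSpace K] [T2Space K] (𝒰 : Set (Set K))
    (hop : ∀ U ∈ 𝒰, IsOpen U)
    (hpf : ∀ x : K, {U ∈ 𝒰 | x ∈ U}.Finite) {O : Set K} (hO : IsOpen O)
    (hne : O.Nonempty) :
    ∃ (n : ℕ) (W : Set K), IsOpen W ∧ W.Nonempty ∧ W ⊆ O ∧
      ∀ x ∈ W, {U ∈ 𝒰 | x ∈ U}.ncard ≤ n := by
  have : LocallyCompactSpace O := hO.isLocallyClosed.locallyCompactSpace
  have : Nonempty O := hne.to_subtype
  have hcl : ∀ n : ℕ, IsClosed ((Subtype.val : O → K) ⁻¹' {x | {U ∈ 𝒰 | x ∈ U}.ncard ≤ n}) := by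
    intro n
    rw [← isOpen_compl_iff]
    have : ((Subtype.val : O → K) ⁻¹' {x | {U ∈ 𝒰 | x ∈ U}.ncard ≤ n})ᶜ =
        (Subtype.val : O → K) ⁻¹' {x | n < {U ∈ 𝒰 | x ∈ U}.ncard} := by
      ext y; simp [not_le]
    rw [this]
    exact (RelCell.isOpen_hi 𝒰 hop hpf n).preimage continuous_subtype_val
  have hun : ⋃ n : ℕ, ((Subtype.val : O → K) ⁻¹' {x | {U ∈ 𝒰 | x ∈ U}.ncard ≤ n}) = Set.univ := by
    ext y
    simp only [mem_iUnion, mem_preimage, mem_setOf_eq, mem_univ, iff_true]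
    exact ⟨_, le_rfl⟩
  obtain ⟨n, hn⟩ := nonempty_interior_of_iUnion_of_closed hcl hun
  refine ⟨n, Subtype.val '' interior ((Subtype.val : O → K) ⁻¹' {x | {U ∈ 𝒰 | x ∈ U}.ncard ≤ n}),
    hO.isOpenMap_subtype_val _ isOpen_interior, hn.image _, ?_, ?_⟩
  · rintro x ⟨y, -, rfl⟩; exact y.2
  · rintro x ⟨y, hy, rfl⟩
    exact (interior_subset hy : _)

/-- The subfamily of members meeting a "good" open set `W ⊆ A` of bounded order is small. -/
lemma RelCell.trace_le (hinf : ℵ₀ ≤ relCell K A) (𝒰 : Set (Set K))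
    (hop : ∀ U ∈ 𝒰, IsOpen U) (hpf : ∀ x : K, {U ∈ 𝒰 | x ∈ U}.Finite)
    {W : Set K} (hW : IsOpen W) (hWA : W ⊆ A) (n : ℕ)
    (hbd : ∀ x ∈ W, {U ∈ 𝒰 | x ∈ U}.ncard ≤ n) :
    #↥{U ∈ 𝒰 | (U ∩ W).Nonempty} ≤ relCell K A := by
  classical
  set G := {U ∈ 𝒰 | (U ∩ W).Nonempty} with hG
  set F := (fun U => U ∩ W) '' G with hFdef
  have hF1 : ∀ V ∈ F, IsOpen V ∧ V.Nonempty ∧ V ⊆ A := by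
    rintro V ⟨U, hU, rfl⟩
    exact ⟨(hop U hU.1).inter hW, hU.2, inter_subset_right.trans hWA⟩
  set f : Set K → Set K := fun V => if h : V ∈ F then h.choose else ∅ with hfdef
  have hf : ∀ V ∈ F, f V ∈ G ∧ f V ∩ W = V := by
    intro V hV
    simp only [hfdef, dif_pos hV]
    exact ⟨hV.choose_spec.1, hV.choose_spec.2⟩
  have hfinj : InjOn f F := by
    intro V hV V' hV' hVW
    rw [← (hf V hV).2, ← (hf V' hV').2, hVW]
  have hF2 : ∀ x ∈ A, {V ∈ F | x ∈ V}.Finite ∧ {V ∈ F | x ∈ V}.ncard ≤ n := by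
    intro x hx
    by_cases hxW : x ∈ W
    · have hmap : ∀ V ∈ {V ∈ F | x ∈ V}, f V ∈ {U ∈ 𝒰 | x ∈ U} := by
        rintro V ⟨hVF, hxV⟩
        obtain ⟨⟨hfu, -⟩, hfV⟩ := hf V hVF
        refine ⟨hfu, ?_⟩
        rw [← hfV] at hxV
        exact hxV.1
      have hinj' : InjOn f {V ∈ F | x ∈ V} := hfinj.mono (sep_subset _ _)
      have hfin : {V ∈ F | x ∈ V}.Finite :=
        Set.Finite.of_finite_image ((hpf x).subset (image_subset_iff.2 hmap)) hinj'
      exact ⟨hfin, le_trans (Set.ncard_le_ncard_of_injOn f hmap hinj' (hpf x)) (hbd x hxW)⟩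
    · have he : {V ∈ F | x ∈ V} = ∅ := by
        ext V
        simp only [mem_sep_iff, mem_empty_iff_false, iff_false, not_and]
        rintro ⟨U, hU, rfl⟩ hxV
        exact hxW hxV.2
      simp [he]
  have hFcard : #↥F ≤ relCell K A := RelCell.point_bdd_le hinf n F hF1 hF2
  have hGsub : G ⊆ ⋃ V ∈ F, {U ∈ G | U ∩ W = V} := fun U hU =>
    mem_biUnion (mem_image_of_mem _ hU) ⟨hU, rfl⟩
  calc #↥G ≤ #↥(⋃ V ∈ F, {U ∈ G | U ∩ W = V}) := Cardinal.mk_le_mk_of_subset hGsub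
    _ ≤ #↥F * ⨆ V : F, #↥{U ∈ G | U ∩ W = (V : Set K)} := Cardinal.mk_biUnion_le _ _
    _ ≤ relCell K A * relCell K A := by
        refine mul_le_mul' hFcard (ciSup_le' ?_)
        rintro ⟨V, hV⟩
        obtain ⟨-, hVne, -⟩ := hF1 V hV
        obtain ⟨x, hxV⟩ := hVne
        have hfib : {U ∈ G | U ∩ W = V} ⊆ {U ∈ 𝒰 | x ∈ U} := by
          rintro U ⟨hUG, rfl⟩
          exact ⟨hUG.1, hxV.1⟩
        exact le_trans ((hpf x).subset hfib).lt_aleph0.le hinf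
    _ = relCell K A := Cardinal.mul_eq_self hinf

/-- Main bound: any point-finite family of open sets meeting `A` has cardinality at most
the relative cellularity (assumed infinite). -/
lemma RelCell.main_bound [CompactSpace K] [T2Space K] (hA : IsOpen A)
    (hinf : ℵ₀ ≤ relCell K A) (𝒰 : Set (Set K))
    (h1 : ∀ U ∈ 𝒰, IsOpen U ∧ (U ∩ A).Nonempty)
    (hpf : ∀ x : K, {U ∈ 𝒰 | x ∈ U}.Finite) : #↥𝒰 ≤ relCell K A := by
  set P := {V : Set K | IsOpen V ∧ V.Nonempty ∧ V ⊆ A ∧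
    #↥{U ∈ 𝒰 | (U ∩ V).Nonempty} ≤ relCell K A} with hP
  obtain ⟨𝒢, h𝒢sub, h𝒢disj, h𝒢max⟩ := RelCell.exists_max_disjoint P
  have hdense : A ⊆ closure (⋃₀ 𝒢) := by
    intro x hx
    by_contra hxc
    have hO : IsOpen (A ∩ (closure (⋃₀ 𝒢))ᶜ) := hA.inter isClosed_closure.isOpen_compl
    have hOne : (A ∩ (closure (⋃₀ 𝒢))ᶜ).Nonempty := ⟨x, hx, hxc⟩
    obtain ⟨n, W, hWo, hWne, hWO, hWbd⟩ :=
      RelCell.baire_step 𝒰 (fun U hU => (h1 U hU).1) hpf hO hOne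
    have hWA : W ⊆ A := fun y hy => (hWO hy).1
    have hWP : W ∈ P :=
      ⟨hWo, hWne, hWA, RelCell.trace_le hinf 𝒰 (fun U hU => (h1 U hU).1) hpf hWo hWA n hWbd⟩
    have hWdisj : ∀ V ∈ 𝒢, W ∩ V = ∅ := by
      intro V hV
      rw [eq_empty_iff_forall_notMem]
      rintro y ⟨hyW, hyV⟩
      exact (hWO hyW).2 (subset_closure ⟨V, hV, hyV⟩)
    have hW𝒢 : W ∉ 𝒢 := by
      intro h
      obtain ⟨y, hy⟩ := hWne
      have := hWdisj W h
      rw [eq_empty_iff_forall_notMem] at this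
      exact this y ⟨hy, hy⟩
    obtain ⟨V, hV, hne⟩ := h𝒢max W hWP hW𝒢
    rw [hWdisj V hV] at hne
    exact hne.ne_empty rfl
  have h𝒢card : #↥𝒢 ≤ relCell K A := by
    refine RelCell.disj_le 𝒢 (fun V hV => ⟨(h𝒢sub hV).1, ?_⟩) h𝒢disj
    obtain ⟨-, hVne, hVA, -⟩ := h𝒢sub hV
    rwa [inter_eq_self_of_subset_left hVA]
  have hcover : 𝒰 ⊆ ⋃ V ∈ 𝒢, {U ∈ 𝒰 | (U ∩ V).Nonempty} := by
    intro U hU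
    obtain ⟨x, hxU, hxA⟩ := (h1 U hU).2
    have hxcl : x ∈ closure (⋃₀ 𝒢) := hdense hxA
    obtain ⟨y, hyU, V, hV, hyV⟩ := (mem_closure_iff.1 hxcl) U (h1 U hU).1 hxU
    exact mem_biUnion hV ⟨hU, y, hyU, hyV⟩
  calc #↥𝒰 ≤ #↥(⋃ V ∈ 𝒢, {U ∈ 𝒰 | (U ∩ V).Nonempty}) := Cardinal.mk_le_mk_of_subset hcover
    _ ≤ #↥𝒢 * ⨆ V : 𝒢, #↥{U ∈ 𝒰 | (U ∩ (V : Set K)).Nonempty} := Cardinal.mk_biUnion_le _ _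
    _ ≤ relCell K A * relCell K A := by
        refine mul_le_mul' h𝒢card (ciSup_le' ?_)
        rintro ⟨V, hV⟩
        exact (h𝒢sub hV).2.2.2
    _ = relCell K A := Cardinal.mul_eq_self hinf

end Aux

/-- For an open subset `A` of a compact Hausdorff space `K` with `c(A, K)` infinite,
`c_pf(A, K) = c(A, K)`; more precisely, every point-finite family of nonempty open subsets
of `K` each intersecting `A` has cardinality at most `c(A, K)`. -/
theorem relPF_eq_relCell_of_isOpen (K : Type*) [TopologicalSpace K] [CompactSpace K]
    [T2Space K] (A : Set K) (hA : IsOpen A) (hinf : ℵ₀ ≤ relCell K A) :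
    relPF K A = relCell K A ∧
      ∀ 𝒰 : Set (Set K), (∀ U ∈ 𝒰, IsOpen U ∧ (U ∩ A).Nonempty) →
        (∀ x : K, {U ∈ 𝒰 | x ∈ U}.Finite) → #↥𝒰 ≤ relCell K A := by
  refine ⟨le_antisymm ?_ ?_, fun 𝒰 h1 h2 => RelCell.main_bound hA hinf 𝒰 h1 h2⟩
  · refine ciSup_le' ?_
    rintro ⟨𝒰, h1, h2⟩
    exact RelCell.main_bound hA hinf 𝒰 h1 h2
  · refine ciSup_le' ?_
    rintro ⟨𝒰, h1, h2⟩
    have hpf : ∀ x : K, {U ∈ 𝒰 | x ∈ U}.Finite := by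
      intro x
      have hss : {U ∈ 𝒰 | x ∈ U}.Subsingleton := by
        intro U hU V hV
        by_contra hne
        have := h2 hU.1 hV.1 hne
        exact absurd rfl ((this.ne_of_mem hU.2 hV.2) : x ≠ x)
      exact hss.finite
    exact le_ciSup (Cardinal.bddAbove_range _) (⟨𝒰, h1, hpf⟩ :
      {𝒰 : Set (Set K) // (∀ U ∈ 𝒰, IsOpen U ∧ (U ∩ A).Nonempty) ∧
        ∀ x : K, {U ∈ 𝒰 | x ∈ U}.Finite})
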